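/- For every β > 3/4 there exists a constant C = C(β) such that for every center P ∈ ℝ², every radius R > 0 and every A > 1: ∑_{p ∈ ℤ², |p − P| = R, |p| ≥ A} ⟨p⟩^{−2β} ≤ C · A^{1 − 2β}, the sum being over the lattice points of ℤ² lying on the circle C(P,R) of radius R centered at P whose Euclidean norm is at least A. -/

import Mathlib

noncomputable section

attribute [local instance] Classical.propDecidable

lemma aux_sum_le_two_mul {α γ : Type*} [DecidableEq γ] (s : Finset α) (h : α → γ)
    (f : α → ℝ) (g : γ → ℝ)
    (hc : ∀ c, (s.filter (fun a => h a = c)).card ≤ 2)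
    (hfg : ∀ a ∈ s, f a ≤ g (h a)) (hg0 : ∀ c, 0 ≤ g c) :
    ∑ a ∈ s, f a ≤ 2 * ∑ c ∈ s.image h, g c := by
  rw [← Finset.sum_fiberwise_of_maps_to (fun a ha => Finset.mem_image_of_mem h ha) f]
  have key : ∀ c ∈ s.image h, ∑ a ∈ s.filter (fun a => h a = c), f a ≤ 2 * g c := by
    intro c _
    calc ∑ a ∈ s.filter (fun a => h a = c), f a
        ≤ (s.filter (fun a => h a = c)).card • g c := by
          apply Finset.sum_le_card_nsmul
          intro a ha
          rw [Finset.mem_filter] at ha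
          rw [← ha.2]; exact hfg a ha.1
      _ ≤ 2 * g c := by
          rw [nsmul_eq_mul]
          exact mul_le_mul_of_nonneg_right (by exact_mod_cast hc c) (hg0 c)
  calc ∑ c ∈ s.image h, ∑ a ∈ s.filter (fun a => h a = c), f a
      ≤ ∑ c ∈ s.image h, 2 * g c := Finset.sum_le_sum key
    _ = 2 * ∑ c ∈ s.image h, g c := by rw [Finset.mul_sum]

lemma aux_core {t r : ℝ} (ht2 : 1/2 ≤ t) (ht1 : t < 1) (hr : 0 < r) :
    1 + min r 1 * (1 - t) ≤ t ^ (-r) := by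
  have ht0 : 0 < t := by linarith
  have hu0 : 0 < 1 - t := by linarith
  have hu2 : 1 - t ≤ 1/2 := by linarith
  rcases le_total r 1 with h1 | h1
  · rw [min_eq_left h1]
    have hb : t ^ r ≤ 1 - r * (1 - t) := by
      have := rpow_one_add_le_one_add_mul_self (s := t - 1) (by linarith) hr.le h1
      have e : 1 + (t - 1) = t := by ring
      rw [e] at this
      nlinarith
    have hpos : 0 < 1 - r * (1 - t) := by nlinarith
    have htr : 0 < t ^ r := Real.rpow_pos_of_pos ht0 r
    have h2 : 1 + r * (1 - t) ≤ (t ^ r)⁻¹ := by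
      rw [← one_div]
      rw [le_div_iff₀ htr]
      nlinarith [mul_le_mul_of_nonneg_left hb (show (0:ℝ) ≤ 1 + r * (1 - t) by nlinarith),
        sq_nonneg (r * (1 - t))]
    calc 1 + r * (1 - t) ≤ (t ^ r)⁻¹ := h2
      _ = t ^ (-r) := (Real.rpow_neg ht0.le r).symm
  · rw [min_eq_right h1]
    have hinv : 1 ≤ t⁻¹ := (one_le_inv₀ ht0).2 ht1.le
    have e1 : t ^ (-r) = (t⁻¹) ^ r := by
      rw [Real.rpow_neg ht0.le, ← Real.inv_rpow ht0.le]
    have e2 : (t⁻¹) ^ (1:ℝ) ≤ (t⁻¹) ^ r := Real.rpow_le_rpow_of_exponent_le hinv h1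
    rw [Real.rpow_one] at e2
    have e3 : 1 + 1 * (1 - t) ≤ t⁻¹ := by
      rw [← one_div, le_div_iff₀ ht0]
      nlinarith
    rw [e1]
    exact e3.trans e2

lemma aux_key {s : ℝ} (hs : 1 < s) {m : ℕ} (hm : 2 ≤ m) :
    min (s - 1) 1 * (m : ℝ) ^ (-s) ≤ ((m - 1 : ℕ) : ℝ) ^ (1 - s) - (m : ℝ) ^ (1 - s) := by
  have hx2 : (2 : ℝ) ≤ (m : ℝ) := by exact_mod_cast hm
  have hx0 : (0 : ℝ) < (m : ℝ) := by linarith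
  have hcast : ((m - 1 : ℕ) : ℝ) = (m : ℝ) - 1 := by
    have h1 : (1:ℕ) ≤ m := by omega
    push_cast [h1]; ring
  set x : ℝ := (m : ℝ) with hxdef
  set t : ℝ := (x - 1) / x with ht
  have ht0 : 0 < t := div_pos (by linarith) hx0
  have ht1 : t < 1 := (div_lt_one hx0).2 (by linarith)
  have htge : 1/2 ≤ t := by rw [ht, le_div_iff₀ hx0]; linarith
  have hu : 1 - t = x⁻¹ := by rw [ht, div_eq_mul_inv, sub_mul, mul_inv_cancel₀ hx0.ne']; ring
  have hr : 0 < s - 1 := by linarith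
  have hcore := aux_core htge ht1 hr
  have hneg : -(s-1) = 1 - s := by ring
  rw [hneg, hu] at hcore
  have hfac : (x - 1) ^ (1 - s) = x ^ (1 - s) * t ^ (1 - s) := by
    rw [ht, Real.div_rpow (by linarith) hx0.le]
    field_simp
  have hxs : x ^ (-s) = x ^ (1 - s) * x⁻¹ := by
    rw [← Real.rpow_neg_one x, ← Real.rpow_add hx0]
    congr 1
    ring
  have hxp : 0 < x ^ (1 - s) := Real.rpow_pos_of_pos hx0 _
  rw [hcast, hfac, hxs]
  calc min (s-1) 1 * (x ^ (1-s) * x⁻¹) = x ^ (1-s) * (min (s-1) 1 * x⁻¹) := by ring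
    _ ≤ x ^ (1-s) * (t ^ (1-s) - 1) := by
        apply mul_le_mul_of_nonneg_left _ hxp.le
        linarith
    _ = x ^ (1-s) * t ^ (1-s) - x ^ (1-s) := by ring

set_option maxHeartbeats 1000000 in
/-- For `β > 3/4` there is `C = C(β)` such that for every circle `C(P,R)` in `ℝ²` and
every `A > 1`, the sum of `⟨p⟩^{-2β}` over lattice points `p ∈ ℤ²` lying on the circle
with `|p| ≥ A` is at most `C · A^{1-2β}`. -/
theorem lattice_points_on_circle_sum :
    ∀ β : ℝ, 3 / 4 < β → ∃ C : ℝ, ∀ (P : ℝ × ℝ) (R A : ℝ), 0 < R → 1 < A →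
      (∑' p : ℤ × ℤ,
        if Real.sqrt (((p.1 : ℝ) - P.1) ^ 2 + ((p.2 : ℝ) - P.2) ^ 2) = R ∧
            A ≤ Real.sqrt ((p.1 : ℝ) ^ 2 + (p.2 : ℝ) ^ 2) then
          ((1 : ℝ) + ((p.1 : ℝ) ^ 2 + (p.2 : ℝ) ^ 2)) ^ (-β)
        else 0) ≤ C * A ^ (1 - 2 * β) := by
  intro β hβ
  have hβ0 : (0:ℝ) < β := by linarith
  have hs1 : 1 < 2 * β := by linarith
  have hc0 : (0:ℝ) < min (2*β - 1) 1 := lt_min (by linarith) one_pos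
  refine ⟨4 * 2 ^ β * (2 + 2 ^ (2*β - 1) / min (2*β - 1) 1), ?_⟩
  intro P R A hR hA
  have hA0 : (0:ℝ) < A := by linarith
  set F : ℤ × ℤ → ℝ := fun p =>
    if Real.sqrt (((p.1 : ℝ) - P.1) ^ 2 + ((p.2 : ℝ) - P.2) ^ 2) = R ∧
        A ≤ Real.sqrt ((p.1 : ℝ) ^ 2 + (p.2 : ℝ) ^ 2) then
      ((1 : ℝ) + ((p.1 : ℝ) ^ 2 + (p.2 : ℝ) ^ 2)) ^ (-β)
    else 0 with hFdef
  -- facts for points in the support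
  have hcond : ∀ p : ℤ × ℤ, F p ≠ 0 →
      ((((p.1 : ℝ) - P.1) ^ 2 + ((p.2 : ℝ) - P.2) ^ 2 = R ^ 2) ∧
       (A ^ 2 ≤ (p.1 : ℝ) ^ 2 + (p.2 : ℝ) ^ 2) ∧
       F p = ((1 : ℝ) + ((p.1 : ℝ) ^ 2 + (p.2 : ℝ) ^ 2)) ^ (-β)) := by
    intro p hp
    by_cases h : Real.sqrt (((p.1 : ℝ) - P.1) ^ 2 + ((p.2 : ℝ) - P.2) ^ 2) = R ∧
        A ≤ Real.sqrt ((p.1 : ℝ) ^ 2 + (p.2 : ℝ) ^ 2)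
    · refine ⟨?_, ?_, by simp only [hFdef]; rw [if_pos h]⟩
      · have h0 : (0:ℝ) ≤ ((p.1 : ℝ) - P.1) ^ 2 + ((p.2 : ℝ) - P.2) ^ 2 := by positivity
        have h1 := Real.sq_sqrt h0
        rw [h.1] at h1
        linarith
      · have h0 : (0:ℝ) ≤ (p.1 : ℝ) ^ 2 + (p.2 : ℝ) ^ 2 := by positivity
        have h2 : A ^ 2 ≤ Real.sqrt ((p.1 : ℝ) ^ 2 + (p.2 : ℝ) ^ 2) ^ 2 :=
          pow_le_pow_left₀ hA0.le h.2 2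
        rwa [Real.sq_sqrt h0] at h2
    · exact absurd (by simp only [hFdef]; rw [if_neg h]) hp
  have hF0 : ∀ p : ℤ × ℤ, 0 ≤ F p := by
    intro p
    simp only [hFdef]
    split
    · positivity
    · exact le_rfl
  set box : Finset (ℤ × ℤ) :=
    (Finset.Icc ⌈P.1 - R⌉ ⌊P.1 + R⌋) ×ˢ (Finset.Icc ⌈P.2 - R⌉ ⌊P.2 + R⌋) with hbox
  have hout : ∀ p : ℤ × ℤ, p ∉ box → F p = 0 := by
    intro p hp
    by_contra hne
    obtain ⟨h1, -, -⟩ := hcond p hne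
    apply hp
    rw [hbox, Finset.mem_product]
    constructor
    · rw [Finset.mem_Icc]
      constructor
      · rw [Int.ceil_le]
        nlinarith [sq_nonneg ((p.2:ℝ) - P.2), sq_nonneg ((p.1:ℝ) - P.1 + R)]
      · rw [Int.le_floor]
        nlinarith [sq_nonneg ((p.2:ℝ) - P.2), sq_nonneg ((p.1:ℝ) - P.1 - R)]
    · rw [Finset.mem_Icc]
      constructor
      · rw [Int.ceil_le]
        nlinarith [sq_nonneg ((p.1:ℝ) - P.1), sq_nonneg ((p.2:ℝ) - P.2 + R)]
      · rw [Int.le_floor]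
        nlinarith [sq_nonneg ((p.1:ℝ) - P.1), sq_nonneg ((p.2:ℝ) - P.2 - R)]
  have htsum : (∑' p : ℤ × ℤ, F p) = ∑ p ∈ box, F p := tsum_eq_sum (fun p hp => hout p hp)
  set supp : Finset (ℤ × ℤ) := box.filter (fun p => F p ≠ 0) with hsupp
  have hsum2 : ∑ p ∈ box, F p = ∑ p ∈ supp, F p := (Finset.sum_filter_ne_zero box).symm
  -- fibers over the first coordinate have at most 2 elements
  have hBcard : ∀ n : ℤ, (supp.filter (fun p => p.1 = n)).card ≤ 2 := by
    intro n
    by_contra hlt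
    push_neg at hlt
    set tset := (supp.filter (fun p => p.1 = n)).image Prod.snd with htset
    have hinj : Set.InjOn Prod.snd ((supp.filter (fun p => p.1 = n) : Finset (ℤ × ℤ)) : Set (ℤ × ℤ)) := by
      intro p hp q hq hpq
      rw [Finset.mem_coe, Finset.mem_filter] at hp hq
      exact Prod.ext (hp.2.trans hq.2.symm) hpq
    have h3 : 2 < tset.card := by
      rw [htset, Finset.card_image_of_injOn hinj]
      exact hlt
    obtain ⟨a, b, c, ha, hb, hc, hab, hac, hbc⟩ := Finset.two_lt_card_iff.1 h3
    have key : ∀ y ∈ tset, ((y:ℝ) - P.2) ^ 2 = R ^ 2 - ((n:ℝ) - P.1) ^ 2 := by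
      intro y hy
      rw [htset, Finset.mem_image] at hy
      obtain ⟨p, hp, rfl⟩ := hy
      rw [Finset.mem_filter] at hp
      obtain ⟨hp1, hp2⟩ := hp
      rw [hsupp, Finset.mem_filter] at hp1
      obtain ⟨h1, -, -⟩ := hcond p hp1.2
      rw [hp2] at h1
      linarith
    have pair : ∀ y z : ℤ, y ∈ tset → z ∈ tset → y ≠ z → (y:ℝ) + (z:ℝ) = 2 * P.2 := by
      intro y z hy hz hyz
      have e1 := key y hy
      have e2 := key z hz
      have e3 : ((y:ℝ) - (z:ℝ)) * ((y:ℝ) + (z:ℝ) - 2 * P.2) = 0 := by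
        linear_combination e1 - e2
      have hyz' : (y:ℝ) ≠ (z:ℝ) := by exact_mod_cast hyz
      rcases mul_eq_zero.1 e3 with h | h
      · exact absurd (by linarith : (y:ℝ) = (z:ℝ)) hyz'
      · linarith
    have e1 := pair a b ha hb hab
    have e2 := pair a c ha hc hac
    have hbceq : (b:ℝ) = (c:ℝ) := by linarith
    exact hbc (by exact_mod_cast hbceq)
  -- Step B : bound sum over supp by sum over first coordinates
  have hg1 : ∀ n : ℤ, (0:ℝ) ≤ (2:ℝ) ^ β * (A ^ 2 + (n:ℝ) ^ 2) ^ (-β) := by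
    intro n; positivity
  have stepB : ∑ p ∈ supp, F p ≤
      2 * ∑ n ∈ supp.image Prod.fst, (2:ℝ) ^ β * (A ^ 2 + (n:ℝ) ^ 2) ^ (-β) := by
    apply aux_sum_le_two_mul supp Prod.fst F _ hBcard _ hg1
    intro p hp
    rw [hsupp, Finset.mem_filter] at hp
    obtain ⟨h1, h2, h3⟩ := hcond p hp.2
    rw [h3]
    have hpos : (0:ℝ) < A ^ 2 + (p.1:ℝ) ^ 2 :=
      add_pos_of_pos_of_nonneg (pow_pos hA0 2) (sq_nonneg _)
    have hle : A ^ 2 + (p.1:ℝ) ^ 2 ≤ 2 * (1 + ((p.1:ℝ) ^ 2 + (p.2:ℝ) ^ 2)) := by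
      nlinarith [sq_nonneg ((p.2:ℝ))]
    have hmono := Real.rpow_le_rpow_of_nonpos hpos hle (neg_nonpos.2 hβ0.le)
    have hsplit : (2 * (1 + ((p.1:ℝ) ^ 2 + (p.2:ℝ) ^ 2))) ^ (-β)
        = 2 ^ (-β) * (1 + ((p.1:ℝ) ^ 2 + (p.2:ℝ) ^ 2)) ^ (-β) := by
      rw [Real.mul_rpow (by norm_num) (by positivity)]
    rw [hsplit] at hmono
    have h2b : (0:ℝ) < 2 ^ β := Real.rpow_pos_of_pos two_pos β
    have hinv : (2:ℝ) ^ β * 2 ^ (-β) = 1 := by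
      rw [← Real.rpow_add two_pos]; norm_num
    calc ((1:ℝ) + ((p.1:ℝ) ^ 2 + (p.2:ℝ) ^ 2)) ^ (-β)
        = 2 ^ β * (2 ^ (-β) * (1 + ((p.1:ℝ) ^ 2 + (p.2:ℝ) ^ 2)) ^ (-β)) := by
          rw [← mul_assoc, hinv, one_mul]
      _ ≤ 2 ^ β * (A ^ 2 + (p.1:ℝ) ^ 2) ^ (-β) :=
          mul_le_mul_of_nonneg_left hmono h2b.le
  -- Step C1 : pass from integers to naturals
  have hC1eq : ∀ n : ℤ, (A ^ 2 + (n:ℝ) ^ 2) ^ (-β) = (A ^ 2 + ((n.natAbs : ℕ):ℝ) ^ 2) ^ (-β) := by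
    intro n
    congr 2
    rw [Nat.cast_natAbs, Int.cast_abs, sq_abs]
  set T : Finset ℤ := supp.image Prod.fst with hT
  set U : Finset ℕ := T.image Int.natAbs with hU
  have stepC1 : ∑ n ∈ T, (A ^ 2 + (n:ℝ) ^ 2) ^ (-β) ≤
      2 * ∑ m ∈ U, (A ^ 2 + (m:ℝ) ^ 2) ^ (-β) := by
    apply aux_sum_le_two_mul T Int.natAbs _ _ ?card ?le ?pos
    case card =>
      intro m
      have hsub : T.filter (fun n => n.natAbs = m) ⊆ {(m:ℤ), -(m:ℤ)} := by
        intro n hn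
        rw [Finset.mem_filter] at hn
        rcases Int.natAbs_eq n with h | h
        · rw [Finset.mem_insert]; left; rw [h, hn.2]
        · rw [Finset.mem_insert, Finset.mem_singleton]; right; rw [h, hn.2]
      calc (T.filter (fun n => n.natAbs = m)).card
          ≤ ({(m:ℤ), -(m:ℤ)} : Finset ℤ).card := Finset.card_le_card hsub
        _ ≤ 2 := (Finset.card_insert_le _ _).trans (by simp)
    case le =>
      intro n _
      exact (hC1eq n).le
    case pos =>
      intro m; positivity
  -- Step C2 : the sum over naturals
  have hA2 : ((A:ℝ) ^ 2) ^ (-β) = A ^ (-(2*β)) := by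
    rw [← Real.rpow_natCast A 2, ← Real.rpow_mul hA0.le]
    congr 1
    push_cast
    ring
  have hsmall : ∑ m ∈ U.filter (fun m : ℕ => (m:ℝ) ≤ A), (A ^ 2 + (m:ℝ) ^ 2) ^ (-β)
      ≤ 2 * A ^ (1 - 2*β) := by
    have hterm : ∀ m ∈ U.filter (fun m : ℕ => (m:ℝ) ≤ A),
        (A ^ 2 + (m:ℝ) ^ 2) ^ (-β) ≤ A ^ (-(2*β)) := by
      intro m _
      rw [← hA2]
      exact Real.rpow_le_rpow_of_nonpos (pow_pos hA0 2) (by nlinarith [sq_nonneg ((m:ℝ))])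
        (neg_nonpos.2 hβ0.le)
    have hsub : U.filter (fun m : ℕ => (m:ℝ) ≤ A) ⊆ Finset.range (⌊A⌋₊ + 1) := by
      intro m hm
      rw [Finset.mem_filter] at hm
      rw [Finset.mem_range, Nat.lt_succ_iff]
      exact Nat.le_floor hm.2
    have hcard : (((U.filter (fun m : ℕ => (m:ℝ) ≤ A)).card : ℕ) : ℝ) ≤ 2 * A := by
      have h1 : (U.filter (fun m : ℕ => (m:ℝ) ≤ A)).card ≤ ⌊A⌋₊ + 1 := by
        simpa using Finset.card_le_card hsub
      have h2 : ((⌊A⌋₊ : ℕ) : ℝ) ≤ A := Nat.floor_le hA0.le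
      calc (((U.filter (fun m : ℕ => (m:ℝ) ≤ A)).card : ℕ) : ℝ) ≤ ((⌊A⌋₊ : ℕ) : ℝ) + 1 := by
            exact_mod_cast h1
        _ ≤ 2 * A := by linarith
    calc ∑ m ∈ U.filter (fun m : ℕ => (m:ℝ) ≤ A), (A ^ 2 + (m:ℝ) ^ 2) ^ (-β)
        ≤ (U.filter (fun m : ℕ => (m:ℝ) ≤ A)).card • A ^ (-(2*β)) :=
          Finset.sum_le_card_nsmul _ _ _ hterm
      _ = (((U.filter (fun m : ℕ => (m:ℝ) ≤ A)).card : ℕ) : ℝ) * A ^ (-(2*β)) := nsmul_eq_mul _ _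
      _ ≤ 2 * A * A ^ (-(2*β)) :=
          mul_le_mul_of_nonneg_right hcard (Real.rpow_nonneg hA0.le _)
      _ = 2 * A ^ (1 - 2*β) := by
          rw [show (1:ℝ) - 2*β = 1 + -(2*β) by ring, Real.rpow_add hA0, Real.rpow_one, mul_assoc]
  have hlarge : ∑ m ∈ U.filter (fun m : ℕ => ¬ (m:ℝ) ≤ A), (A ^ 2 + (m:ℝ) ^ 2) ^ (-β)
      ≤ (2 ^ (2*β - 1) / min (2*β - 1) 1) * A ^ (1 - 2*β) := by
    set N : ℕ := ⌊A⌋₊ + 1 with hN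
    set V : Finset ℕ := U.filter (fun m : ℕ => ¬ (m:ℝ) ≤ A) with hV
    set M : ℕ := V.sup id with hM
    have hfl1 : 1 ≤ ⌊A⌋₊ := Nat.le_floor (by exact_mod_cast hA.le)
    have hN2 : 2 ≤ N := by omega
    have hVlarge : ∀ m ∈ V, A < (m:ℝ) := by
      intro m hm
      rw [hV, Finset.mem_filter] at hm
      exact lt_of_not_ge hm.2
    have hsub : V ⊆ Finset.Icc N M := by
      intro m hm
      rw [Finset.mem_Icc]
      constructor
      · have h1 : A < (m:ℝ) := hVlarge m hm
        have h2 : ⌊A⌋₊ < m := by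
          by_contra hcon
          push_neg at hcon
          have h3 : (m:ℝ) ≤ ((⌊A⌋₊ : ℕ) : ℝ) := by exact_mod_cast hcon
          have h4 := Nat.floor_le hA0.le
          linarith
        omega
      · exact Finset.le_sup (f := id) hm
    have hstep1 : ∑ m ∈ V, (A ^ 2 + (m:ℝ) ^ 2) ^ (-β) ≤ ∑ m ∈ V, (m:ℝ) ^ (-(2*β)) := by
      apply Finset.sum_le_sum
      intro m hm
      have h1 : A < (m:ℝ) := hVlarge m hm
      have hm0 : (0:ℝ) < (m:ℝ) ^ 2 := by nlinarith
      have : ((m:ℝ) ^ 2) ^ (-β) = (m:ℝ) ^ (-(2*β)) := by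
        rw [← Real.rpow_natCast (m:ℝ) 2, ← Real.rpow_mul (by positivity)]
        congr 1
        push_cast
        ring
      rw [← this]
      exact Real.rpow_le_rpow_of_nonpos hm0 (by nlinarith) (neg_nonpos.2 hβ0.le)
    have hstep2 : ∑ m ∈ V, (m:ℝ) ^ (-(2*β)) ≤ ∑ m ∈ Finset.Icc N M, (m:ℝ) ^ (-(2*β)) := by
      apply Finset.sum_le_sum_of_subset_of_nonneg hsub
      intro m _ _
      exact Real.rpow_nonneg (Nat.cast_nonneg m) _
    have hstep3 : ∑ m ∈ Finset.Icc N M, (m:ℝ) ^ (-(2*β)) ≤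
        (min (2*β - 1) 1)⁻¹ *
          ∑ m ∈ Finset.Icc N M, (((m - 1 : ℕ) : ℝ) ^ (1 - 2*β) - (m:ℝ) ^ (1 - 2*β)) := by
      rw [Finset.mul_sum]
      apply Finset.sum_le_sum
      intro m hm
      rw [Finset.mem_Icc] at hm
      have hm2 : 2 ≤ m := le_trans hN2 hm.1
      have hk := aux_key hs1 hm2
      have := mul_le_mul_of_nonneg_left hk (inv_nonneg.2 hc0.le)
      rw [← mul_assoc, inv_mul_cancel₀ hc0.ne', one_mul] at this
      exact this
    have htel : ∑ m ∈ Finset.Icc N M, (((m - 1 : ℕ) : ℝ) ^ (1 - 2*β) - (m:ℝ) ^ (1 - 2*β))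
        ≤ ((⌊A⌋₊ : ℕ) : ℝ) ^ (1 - 2*β) := by
      set G : ℕ → ℝ := fun i => ((N - 1 + i : ℕ) : ℝ) ^ (1 - 2*β) with hG
      have hsum : ∑ m ∈ Finset.Icc N M, (((m - 1 : ℕ) : ℝ) ^ (1 - 2*β) - (m:ℝ) ^ (1 - 2*β))
          = ∑ i ∈ Finset.range (M + 1 - N), (G i - G (i + 1)) := by
        rw [← Finset.Ico_add_one_right_eq_Icc, Finset.sum_Ico_eq_sum_range]
        apply Finset.sum_congr rfl
        intro i _
        have e1 : N + i - 1 = N - 1 + i := by omega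
        have e2 : N + i = N - 1 + (i + 1) := by omega
        simp only [hG]
        rw [e1, e2]
      rw [hsum, Finset.sum_range_sub' G]
      have hG0 : G 0 = ((⌊A⌋₊ : ℕ) : ℝ) ^ (1 - 2*β) := by
        have e : N - 1 + 0 = ⌊A⌋₊ := by omega
        simp only [hG, e]
      have hGn : 0 ≤ G (M + 1 - N) := Real.rpow_nonneg (Nat.cast_nonneg _) _
      rw [hG0]
      linarith
    have hfloor : ((⌊A⌋₊ : ℕ) : ℝ) ^ (1 - 2*β) ≤ 2 ^ (2*β - 1) * A ^ (1 - 2*β) := by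
      have hhalf : A / 2 ≤ ((⌊A⌋₊ : ℕ) : ℝ) := by
        rcases le_or_gt 2 A with h | h
        · have := Nat.lt_floor_add_one A
          linarith
        · have h1 : (1:ℝ) ≤ ((⌊A⌋₊ : ℕ) : ℝ) := by exact_mod_cast hfl1
          linarith
      have h1 : ((⌊A⌋₊ : ℕ) : ℝ) ^ (1 - 2*β) ≤ (A / 2) ^ (1 - 2*β) :=
        Real.rpow_le_rpow_of_nonpos (by linarith) hhalf (by linarith)
      have h2 : (A / 2 : ℝ) ^ (1 - 2*β) = 2 ^ (2*β - 1) * A ^ (1 - 2*β) := by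
        rw [Real.div_rpow hA0.le (by norm_num : (0:ℝ) ≤ 2), div_eq_mul_inv, mul_comm]
        congr 1
        rw [← Real.rpow_neg (by norm_num : (0:ℝ) ≤ 2)]
        congr 1
        ring
      rw [h2] at h1
      exact h1
    calc ∑ m ∈ V, (A ^ 2 + (m:ℝ) ^ 2) ^ (-β)
        ≤ ∑ m ∈ V, (m:ℝ) ^ (-(2*β)) := hstep1
      _ ≤ ∑ m ∈ Finset.Icc N M, (m:ℝ) ^ (-(2*β)) := hstep2
      _ ≤ (min (2*β - 1) 1)⁻¹ *
            ∑ m ∈ Finset.Icc N M, (((m - 1 : ℕ) : ℝ) ^ (1 - 2*β) - (m:ℝ) ^ (1 - 2*β)) := hstep3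
      _ ≤ (min (2*β - 1) 1)⁻¹ * (((⌊A⌋₊ : ℕ) : ℝ) ^ (1 - 2*β)) :=
            mul_le_mul_of_nonneg_left htel (inv_nonneg.2 hc0.le)
      _ ≤ (min (2*β - 1) 1)⁻¹ * (2 ^ (2*β - 1) * A ^ (1 - 2*β)) :=
            mul_le_mul_of_nonneg_left hfloor (inv_nonneg.2 hc0.le)
      _ = (2 ^ (2*β - 1) / min (2*β - 1) 1) * A ^ (1 - 2*β) := by
            field_simp
  have stepC2 : ∑ m ∈ U, (A ^ 2 + (m:ℝ) ^ 2) ^ (-β) ≤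
      (2 + 2 ^ (2*β - 1) / min (2*β - 1) 1) * A ^ (1 - 2*β) := by
    rw [← Finset.sum_filter_add_sum_filter_not U (fun m : ℕ => (m:ℝ) ≤ A)]
    calc ∑ m ∈ U.filter (fun m : ℕ => (m:ℝ) ≤ A), (A ^ 2 + (m:ℝ) ^ 2) ^ (-β)
          + ∑ m ∈ U.filter (fun m : ℕ => ¬ (m:ℝ) ≤ A), (A ^ 2 + (m:ℝ) ^ 2) ^ (-β)
        ≤ 2 * A ^ (1 - 2*β) + (2 ^ (2*β - 1) / min (2*β - 1) 1) * A ^ (1 - 2*β) :=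
          add_le_add hsmall hlarge
      _ = (2 + 2 ^ (2*β - 1) / min (2*β - 1) 1) * A ^ (1 - 2*β) := by ring
  calc (∑' p : ℤ × ℤ, F p) = ∑ p ∈ supp, F p := by rw [htsum, hsum2]
    _ ≤ 2 * ∑ n ∈ T, (2:ℝ) ^ β * (A ^ 2 + (n:ℝ) ^ 2) ^ (-β) := stepB
    _ = 2 * (2:ℝ) ^ β * ∑ n ∈ T, (A ^ 2 + (n:ℝ) ^ 2) ^ (-β) := by
        rw [← Finset.mul_sum, ← mul_assoc]
    _ ≤ 2 * (2:ℝ) ^ β * (2 * ∑ m ∈ U, (A ^ 2 + (m:ℝ) ^ 2) ^ (-β)) := by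
        have hb : (0:ℝ) ≤ 2 * (2:ℝ) ^ β := by positivity
        exact mul_le_mul_of_nonneg_left stepC1 hb
    _ = 4 * (2:ℝ) ^ β * ∑ m ∈ U, (A ^ 2 + (m:ℝ) ^ 2) ^ (-β) := by ring
    _ ≤ 4 * (2:ℝ) ^ β * ((2 + 2 ^ (2*β - 1) / min (2*β - 1) 1) * A ^ (1 - 2*β)) := by
        have hb : (0:ℝ) ≤ 4 * (2:ℝ) ^ β := by positivity
        exact mul_le_mul_of_nonneg_left stepC2 hb
    _ = 4 * 2 ^ β * (2 + 2 ^ (2*β - 1) / min (2*β - 1) 1) * A ^ (1 - 2*β) := by ring
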